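/- Let T > 0, m ≥ 1 an integer, X := L²((0,T);ℝ^m) × ℝ^m with the product Hilbert space structure, and let A : X → X be a continuous linear self-adjoint map with ⟨A z, z⟩_X ≥ 0 for all z ∈ X; write A(h,k) = (A₁(h,k), A₂(h,k)) ∈ L²((0,T);ℝ^m) × ℝ^m. Let γ > 0 and κ > 0. Then there exists a constant C > 0, depending only on γ, κ and the operator norm ‖A‖, such that for every choice of Lebesgue-measurable sets E₁,…,E_m ⊆ (0,T), the bounded linear operator D : X → X defined by D(h,k) = ((hᵢ + γ⁻¹·𝟙_{Eᵢ}·(A₁(h,k))ᵢ)_{i=1}^m, (κ/γ)k + γ⁻¹·A₂(h,k)) is bijective and its inverse satisfies ‖D⁻¹‖ ≤ C. -/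

import Mathlib

open MeasureTheory RealInnerProductSpace

/-- The product Hilbert space `L²((0,T);ℝ^m) × ℝ^m`. -/
abbrev Xsp (T : ℝ) (m : ℕ) :=
  Lp (EuclideanSpace ℝ (Fin m)) 2 (volume.restrict (Set.Ioo 0 T)) × EuclideanSpace ℝ (Fin m)

set_option maxHeartbeats 1000000
set_option synthInstance.maxHeartbeats 400000

namespace NDAux

noncomputable def pe {m : ℕ} (E : Fin m → Set ℝ) (t : ℝ) (v : EuclideanSpace ℝ (Fin m)) :
    EuclideanSpace ℝ (Fin m) := WithLp.toLp 2 (fun i => (E i).indicator (fun _ => (1:ℝ)) t * v i)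

variable {m : ℕ} {μ : Measure ℝ} (E : Fin m → Set ℝ)

lemma pe_apply (t : ℝ) (v : EuclideanSpace ℝ (Fin m)) (i : Fin m) :
    pe E t v i = (E i).indicator (fun _ => (1:ℝ)) t * v i := rfl

lemma ind_mem (t : ℝ) (i : Fin m) :
    (E i).indicator (fun _ => (1:ℝ)) t = 0 ∨ (E i).indicator (fun _ => (1:ℝ)) t = 1 := by
  by_cases h : t ∈ E i <;> simp [Set.indicator_apply, h]

lemma pe_norm_le (t : ℝ) (v : EuclideanSpace ℝ (Fin m)) : ‖pe E t v‖ ≤ ‖v‖ := by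
  rw [EuclideanSpace.norm_eq, EuclideanSpace.norm_eq]
  apply Real.sqrt_le_sqrt
  apply Finset.sum_le_sum
  intro i _
  have : ‖pe E t v i‖ ≤ ‖v i‖ := by
    rw [pe_apply, norm_mul]
    have h1 : ‖(E i).indicator (fun _ => (1:ℝ)) t‖ ≤ 1 := by
      rcases ind_mem E t i with h | h <;> rw [h] <;> norm_num
    calc ‖(E i).indicator (fun _ => (1:ℝ)) t‖ * ‖v i‖ ≤ 1 * ‖v i‖ :=
          mul_le_mul_of_nonneg_right h1 (norm_nonneg _)
      _ = ‖v i‖ := one_mul _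
  exact pow_le_pow_left₀ (norm_nonneg _) this 2

lemma sub_pe_norm_le (t : ℝ) (v : EuclideanSpace ℝ (Fin m)) : ‖v - pe E t v‖ ≤ ‖v‖ := by
  rw [EuclideanSpace.norm_eq, EuclideanSpace.norm_eq]
  apply Real.sqrt_le_sqrt
  apply Finset.sum_le_sum
  intro i _
  have h1 : (v - pe E t v) i = (1 - (E i).indicator (fun _ => (1:ℝ)) t) * v i := by
    simp [pe_apply, sub_mul]
  have : ‖(v - pe E t v) i‖ ≤ ‖v i‖ := by
    rw [h1, norm_mul]
    have h2 : ‖(1 - (E i).indicator (fun _ => (1:ℝ)) t)‖ ≤ 1 := by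
      rcases ind_mem E t i with h | h <;> rw [h] <;> norm_num
    calc _ ≤ 1 * ‖v i‖ := mul_le_mul_of_nonneg_right h2 (norm_nonneg _)
      _ = ‖v i‖ := one_mul _
  exact pow_le_pow_left₀ (norm_nonneg _) this 2

lemma pe_pe (t : ℝ) (v : EuclideanSpace ℝ (Fin m)) : pe E t (pe E t v) = pe E t v := by
  ext i
  rcases ind_mem E t i with h | h <;> simp [pe_apply, h]

lemma pe_inner (t : ℝ) (v w : EuclideanSpace ℝ (Fin m)) :
    ⟪pe E t v, w⟫ = ⟪v, pe E t w⟫ := by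
  simp only [PiLp.inner_apply, RCLike.inner_apply, conj_trivial, pe_apply]
  congr 1; funext i; ring

lemma pe_add (t : ℝ) (v w : EuclideanSpace ℝ (Fin m)) :
    pe E t (v + w) = pe E t v + pe E t w := by
  ext i; simp [pe_apply, mul_add]

lemma pe_smul (t : ℝ) (c : ℝ) (v : EuclideanSpace ℝ (Fin m)) :
    pe E t (c • v) = c • pe E t v := by
  ext i; simp [pe_apply]; ring

lemma pe_meas (hE : ∀ i, MeasurableSet (E i)) (g : ℝ → EuclideanSpace ℝ (Fin m))
    (hg : Measurable g) : Measurable (fun t => pe E t (g t)) := by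
  have h : Measurable fun t => ((MeasurableEquiv.toLp 2 (Fin m → ℝ)).symm (pe E t (g t))) := by
    rw [measurable_pi_iff]
    intro i
    have h1 : Measurable fun t => g t i := by
      have := (MeasurableEquiv.toLp 2 (Fin m → ℝ)).symm.measurable.comp hg
      exact (measurable_pi_apply i).comp this
    exact (measurable_const.indicator (hE i)).mul h1
  have := (MeasurableEquiv.toLp 2 (Fin m → ℝ)).symm.symm.measurable.comp h
  exact this

lemma pe_aesm (hE : ∀ i, MeasurableSet (E i)) (f : Lp (EuclideanSpace ℝ (Fin m)) 2 μ) :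
    AEStronglyMeasurable (fun t => pe E t (f t)) μ := by
  obtain ⟨g, hgm, hfg⟩ := (Lp.aestronglyMeasurable f)
  refine ⟨fun t => pe E t (g t), (pe_meas E hE g hgm.measurable).stronglyMeasurable, ?_⟩
  filter_upwards [hfg] with t ht
  rw [ht]

lemma peMem (hE : ∀ i, MeasurableSet (E i)) (f : Lp (EuclideanSpace ℝ (Fin m)) 2 μ) :
    MemLp (fun t => pe E t (f t)) 2 μ := by
  refine ⟨pe_aesm E hE f, ?_⟩
  calc eLpNorm (fun t => pe E t (f t)) 2 μ ≤ eLpNorm f 2 μ := by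
        apply eLpNorm_mono_ae
        filter_upwards with t using pe_norm_le E t (f t)
    _ < ⊤ := Lp.eLpNorm_lt_top f

noncomputable def P (hE : ∀ i, MeasurableSet (E i)) :
    Lp (EuclideanSpace ℝ (Fin m)) 2 μ →L[ℝ] Lp (EuclideanSpace ℝ (Fin m)) 2 μ := by
  refine LinearMap.mkContinuous
    { toFun := fun f => (peMem E hE f).toLp _
      map_add' := ?_, map_smul' := ?_ } 1 ?_
  · intro f g
    apply Lp.ext
    filter_upwards [(peMem E hE (f+g)).coeFn_toLp, (peMem E hE f).coeFn_toLp,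
      (peMem E hE g).coeFn_toLp, Lp.coeFn_add f g,
      Lp.coeFn_add ((peMem E hE f).toLp _) ((peMem E hE g).toLp _)] with t h1 h2 h3 h4 h5
    simp only [h1, h5, Pi.add_apply, h2, h3, h4]
    exact pe_add E t _ _
  · intro c f
    apply Lp.ext
    filter_upwards [(peMem E hE (c • f)).coeFn_toLp, (peMem E hE f).coeFn_toLp,
      Lp.coeFn_smul c f, Lp.coeFn_smul c ((peMem E hE f).toLp _)] with t h1 h2 h3 h4
    simp only [RingHom.id_apply, h1, h4, Pi.smul_apply, h2, h3]
    exact pe_smul E t c _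
  · intro f
    rw [one_mul]
    show ‖(peMem E hE f).toLp _‖ ≤ ‖f‖
    rw [Lp.norm_toLp, Lp.norm_def]
    apply ENNReal.toReal_mono (Lp.eLpNorm_lt_top f).ne
    apply eLpNorm_mono_ae
    filter_upwards with t using pe_norm_le E t (f t)

lemma P_coe (hE : ∀ i, MeasurableSet (E i)) (f : Lp (EuclideanSpace ℝ (Fin m)) 2 μ) :
    (P E hE f : ℝ → EuclideanSpace ℝ (Fin m)) =ᵐ[μ] fun t => pe E t (f t) :=
  (peMem E hE f).coeFn_toLp


lemma Lp_norm_le_ae {f g : Lp (EuclideanSpace ℝ (Fin m)) 2 μ}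
    (h : ∀ᵐ t ∂μ, ‖(f : ℝ → EuclideanSpace ℝ (Fin m)) t‖ ≤ ‖(g : ℝ → EuclideanSpace ℝ (Fin m)) t‖) :
    ‖f‖ ≤ ‖g‖ := by
  rw [Lp.norm_def, Lp.norm_def]
  exact ENNReal.toReal_mono (Lp.eLpNorm_lt_top g).ne (eLpNorm_mono_ae h)

variable (hE : ∀ i, MeasurableSet (E i))

lemma P_norm_le (f : Lp (EuclideanSpace ℝ (Fin m)) 2 μ) : ‖P E hE f‖ ≤ ‖f‖ := by
  apply Lp_norm_le_ae
  filter_upwards [P_coe E hE f] with t h1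
  rw [h1]; exact pe_norm_le E t _

lemma sub_P_norm_le (f : Lp (EuclideanSpace ℝ (Fin m)) 2 μ) : ‖f - P E hE f‖ ≤ ‖f‖ := by
  apply Lp_norm_le_ae
  filter_upwards [P_coe E hE f, Lp.coeFn_sub f (P E hE f)] with t h1 h2
  rw [h2, Pi.sub_apply, h1]; exact sub_pe_norm_le E t _

lemma P_idem (f : Lp (EuclideanSpace ℝ (Fin m)) 2 μ) : P E hE (P E hE f) = P E hE f := by
  apply Lp.ext
  filter_upwards [P_coe E hE (P E hE f), P_coe E hE f] with t h1 h2
  rw [h1, h2, pe_pe]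

lemma P_symm (f g : Lp (EuclideanSpace ℝ (Fin m)) 2 μ) :
    ⟪P E hE f, g⟫ = ⟪f, P E hE g⟫ := by
  rw [L2.inner_def, L2.inner_def]
  apply integral_congr_ae
  filter_upwards [P_coe E hE f, P_coe E hE g] with t h1 h2
  rw [h1, h2, pe_inner]

lemma inner_P_self (f : Lp (EuclideanSpace ℝ (Fin m)) 2 μ) :
    ⟪f, P E hE f⟫ = ‖P E hE f‖ ^ 2 := by
  have h1 : ⟪f, P E hE f⟫ = ⟪f, P E hE (P E hE f)⟫ := by rw [P_idem]
  rw [h1, ← P_symm, ← real_inner_self_eq_norm_sq]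


variable (γ κ : ℝ)

local notation "X" => (Lp (EuclideanSpace ℝ (Fin m)) 2 μ × EuclideanSpace ℝ (Fin m))

noncomputable def S : X →L[ℝ] X :=
  (ContinuousLinearMap.id ℝ _).prodMap ((κ/γ) • ContinuousLinearMap.id ℝ _)

noncomputable def Q : X →L[ℝ] X :=
  (P E hE).prodMap (ContinuousLinearMap.id ℝ _)

noncomputable def Ds (A : X →L[ℝ] X) (s : ℝ) : X →L[ℝ] X :=
  S γ κ + (s * γ⁻¹) • ((Q E hE).comp A)

lemma Ds_fst (A : X →L[ℝ] X) (s : ℝ) (z : X) :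
    (Ds E hE γ κ A s z).1 = z.1 + (s * γ⁻¹) • P E hE ((A z).1) := by
  simp [Ds, S, Q]

lemma Ds_snd (A : X →L[ℝ] X) (s : ℝ) (z : X) :
    (Ds E hE γ κ A s z).2 = (κ/γ) • z.2 + (s * γ⁻¹) • ((A z).2) := by
  simp [Ds, S, Q]

lemma Q_norm_le (z : X) : ‖Q E hE z‖ ≤ ‖z‖ := by
  rw [Prod.norm_def, Prod.norm_def]
  exact max_le_max (by simpa [Q] using P_norm_le E hE z.1) (le_of_eq (by simp [Q]))


lemma lower_bound (hγ : 0 < γ) (hκ : 0 < κ) (M : ℝ) (hM : 0 ≤ M)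
    (A : X →L[ℝ] X)
    (hpos : ∀ z : X, 0 ≤ ⟪(A z).1, z.1⟫ + ⟪(A z).2, z.2⟫)
    (hAM : ‖A‖ ≤ M) (s : ℝ) (hs0 : 0 ≤ s) (hs1 : s ≤ 1) (z : X) :
    ‖z‖ ≤ (2 * (1 + M/γ) / min 1 (κ/γ) + 1) * ‖Ds E hE γ κ A s z‖ := by
  set α := min 1 (κ/γ) with hα
  have hα0 : 0 < α := lt_min one_pos (div_pos hκ hγ)
  set d := Ds E hE γ κ A s z with hd
  set N := ‖d‖ with hN
  have hN0 : 0 ≤ N := norm_nonneg _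
  set c := s * γ⁻¹ with hc
  have hc0 : 0 ≤ c := mul_nonneg hs0 (inv_nonneg.mpr hγ.le)
  have hcγ : c ≤ γ⁻¹ := by
    calc c ≤ 1 * γ⁻¹ := by apply mul_le_mul_of_nonneg_right hs1 (inv_nonneg.mpr hγ.le)
      _ = γ⁻¹ := one_mul _
  set u := P E hE z.1 with hu
  set w : X := (u, z.2) with hw
  -- norms of components of d
  have hd1 : ‖d.1‖ ≤ N := by rw [hN, Prod.norm_def]; exact le_max_left _ _
  have hd2 : ‖d.2‖ ≤ N := by rw [hN, Prod.norm_def]; exact le_max_right _ _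
  -- step (i)
  have step1 : ‖z.1 - u‖ ≤ N := by
    have e1 : d.1 - P E hE d.1 = z.1 - u := by
      rw [hd, Ds_fst, map_add, _root_.map_smul, P_idem, hu]
      abel
    calc ‖z.1 - u‖ = ‖d.1 - P E hE d.1‖ := by rw [e1]
      _ ≤ ‖d.1‖ := sub_P_norm_le E hE d.1
      _ ≤ N := hd1
  -- step (ii)
  have inner1 : ⟪d.1, u⟫ = ‖u‖^2 + c * ⟪(A z).1, u⟫ := by
    rw [hd, Ds_fst, inner_add_left, real_inner_smul_left]
    congr 1
    · rw [hu, inner_P_self]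
    · congr 1
      rw [hu, P_symm, P_idem]
  have inner2 : ⟪d.2, z.2⟫ = (κ/γ) * ‖z.2‖^2 + c * ⟪(A z).2, z.2⟫ := by
    rw [hd, Ds_snd, inner_add_left, real_inner_smul_left, real_inner_smul_left,
      real_inner_self_eq_norm_sq]
  -- the A-term estimate
  have hzw : z - w = (z.1 - u, (0 : EuclideanSpace ℝ (Fin m))) := by
    rw [hw]; exact Prod.ext rfl (sub_self z.2)
  have hzwn : ‖z - w‖ ≤ N := by
    rw [hzw, Prod.norm_def]
    simp only [norm_zero]
    exact max_le step1 hN0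
  have hAzw1 : ‖(A (z - w)).1‖ ≤ M * N := by
    calc ‖(A (z - w)).1‖ ≤ ‖A (z - w)‖ := by rw [Prod.norm_def]; exact le_max_left _ _
      _ ≤ ‖A‖ * ‖z - w‖ := A.le_opNorm _
      _ ≤ M * N := mul_le_mul hAM hzwn (norm_nonneg _) hM
  have hAzw2 : ‖(A (z - w)).2‖ ≤ M * N := by
    calc ‖(A (z - w)).2‖ ≤ ‖A (z - w)‖ := by rw [Prod.norm_def]; exact le_max_right _ _
      _ ≤ ‖A‖ * ‖z - w‖ := A.le_opNorm _
      _ ≤ M * N := mul_le_mul hAM hzwn (norm_nonneg _) hM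
  have hsplit : ⟪(A z).1, u⟫ + ⟪(A z).2, z.2⟫
      = (⟪(A w).1, w.1⟫ + ⟪(A w).2, w.2⟫)
        + (⟪(A (z - w)).1, w.1⟫ + ⟪(A (z - w)).2, w.2⟫) := by
    have hz2 : A z = A (z - w) + A w := by rw [← map_add, sub_add_cancel]
    have e1 : (A z).1 = (A (z - w)).1 + (A w).1 := by rw [hz2]; rfl
    have e2 : (A z).2 = (A (z - w)).2 + (A w).2 := by rw [hz2]; rfl
    have hw1 : w.1 = u := rfl
    have hw2 : w.2 = z.2 := rfl
    rw [e1, e2, inner_add_left, inner_add_left, hw1, hw2]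
    ring
  have hAterm : -(M * N * (‖u‖ + ‖z.2‖)) ≤ ⟪(A z).1, u⟫ + ⟪(A z).2, z.2⟫ := by
    have hw1 : w.1 = u := rfl
    have hw2 : w.2 = z.2 := rfl
    rw [hsplit, hw1, hw2]
    have h1 : -(M * N * ‖u‖) ≤ ⟪(A (z - w)).1, u⟫ := by
      have habs := abs_real_inner_le_norm ((A (z - w)).1) u
      have h2 : ‖(A (z - w)).1‖ * ‖u‖ ≤ M * N * ‖u‖ :=
        mul_le_mul_of_nonneg_right hAzw1 (norm_nonneg _)
      linarith [neg_abs_le (⟪(A (z - w)).1, u⟫ : ℝ)]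
    have h3 : -(M * N * ‖z.2‖) ≤ ⟪(A (z - w)).2, z.2⟫ := by
      have habs := abs_real_inner_le_norm ((A (z - w)).2) z.2
      have h4 : ‖(A (z - w)).2‖ * ‖z.2‖ ≤ M * N * ‖z.2‖ :=
        mul_le_mul_of_nonneg_right hAzw2 (norm_nonneg _)
      linarith [neg_abs_le (⟪(A (z - w)).2, z.2⟫ : ℝ)]
    have h5 := hpos w
    rw [hw1, hw2] at h5
    linarith
  -- inner products bounded by norms
  have hi1 : ⟪d.1, u⟫ ≤ N * ‖u‖ := by
    calc ⟪d.1, u⟫ ≤ ‖d.1‖ * ‖u‖ := real_inner_le_norm _ _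
      _ ≤ N * ‖u‖ := mul_le_mul_of_nonneg_right hd1 (norm_nonneg _)
  have hi2 : ⟪d.2, z.2⟫ ≤ N * ‖z.2‖ := by
    calc ⟪d.2, z.2⟫ ≤ ‖d.2‖ * ‖z.2‖ := real_inner_le_norm _ _
      _ ≤ N * ‖z.2‖ := mul_le_mul_of_nonneg_right hd2 (norm_nonneg _)
  -- combine
  set r := max ‖u‖ ‖z.2‖ with hr
  have hr0 : 0 ≤ r := le_max_of_le_left (norm_nonneg _)
  have hur : ‖u‖ ≤ r := le_max_left _ _
  have hzr : ‖z.2‖ ≤ r := le_max_right _ _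
  have hmain : ‖u‖^2 + (κ/γ) * ‖z.2‖^2 ≤ (1 + M/γ) * N * (2 * r) := by
    have e2 : ‖u‖^2 + (κ/γ) * ‖z.2‖^2
        = (⟪d.1, u⟫ + ⟪d.2, z.2⟫) - c * (⟪(A z).1, u⟫ + ⟪(A z).2, z.2⟫) := by
      rw [inner1, inner2]; ring
    have h6 : - (c * (⟪(A z).1, u⟫ + ⟪(A z).2, z.2⟫)) ≤ γ⁻¹ * (M * N * (‖u‖ + ‖z.2‖)) := by
      have h7 : c * (-(M * N * (‖u‖ + ‖z.2‖))) ≤ c * (⟪(A z).1, u⟫ + ⟪(A z).2, z.2⟫) :=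
        mul_le_mul_of_nonneg_left hAterm hc0
      have h8 : c * (M * N * (‖u‖ + ‖z.2‖)) ≤ γ⁻¹ * (M * N * (‖u‖ + ‖z.2‖)) := by
        apply mul_le_mul_of_nonneg_right hcγ
        have : 0 ≤ ‖u‖ + ‖z.2‖ := by positivity
        positivity
      linarith
    have h9 : ‖u‖ + ‖z.2‖ ≤ 2 * r := by linarith
    have h10 : γ⁻¹ * (M * N * (‖u‖ + ‖z.2‖)) ≤ (M/γ) * N * (2*r) := by
      have h9' : M * N * (‖u‖ + ‖z.2‖) ≤ M * N * (2*r) :=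
        mul_le_mul_of_nonneg_left h9 (mul_nonneg hM hN0)
      calc γ⁻¹ * (M * N * (‖u‖ + ‖z.2‖)) ≤ γ⁻¹ * (M * N * (2*r)) :=
            mul_le_mul_of_nonneg_left h9' (inv_nonneg.mpr hγ.le)
        _ = (M/γ) * N * (2*r) := by rw [div_eq_mul_inv]; ring
    have h11 : ⟪d.1, u⟫ + ⟪d.2, z.2⟫ ≤ N * (2 * r) := by
      calc ⟪d.1, u⟫ + ⟪d.2, z.2⟫ ≤ N * ‖u‖ + N * ‖z.2‖ := add_le_add hi1 hi2
        _ = N * (‖u‖ + ‖z.2‖) := by ring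
        _ ≤ N * (2*r) := mul_le_mul_of_nonneg_left h9 hN0
    rw [e2]
    have hring : N * (2*r) + (M/γ) * N * (2*r) = (1 + M/γ) * N * (2 * r) := by ring
    linarith
  have hα1 : α * r^2 ≤ ‖u‖^2 + (κ/γ) * ‖z.2‖^2 := by
    rcases max_cases ‖u‖ ‖z.2‖ with ⟨h, _⟩ | ⟨h, _⟩
    · have hα2 : α ≤ 1 := min_le_left _ _
      rw [hr, h]
      have e3 : α * ‖u‖^2 ≤ ‖u‖^2 := by nlinarith [sq_nonneg ‖u‖]
      have e4 : 0 ≤ (κ/γ) * ‖z.2‖^2 := by positivity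
      linarith
    · have hα2 : α ≤ κ/γ := min_le_right _ _
      rw [hr, h]
      have e3 : α * ‖z.2‖^2 ≤ (κ/γ) * ‖z.2‖^2 := by nlinarith [sq_nonneg ‖z.2‖]
      have e4 : 0 ≤ ‖u‖^2 := sq_nonneg _
      linarith
  have hrN : r ≤ 2 * (1 + M/γ) / α * N := by
    rcases eq_or_lt_of_le hr0 with h | h
    · rw [← h]
      have : 0 ≤ M/γ := div_nonneg hM hγ.le
      positivity
    · have h12 : α * r^2 ≤ (1 + M/γ) * N * (2 * r) := le_trans hα1 hmain
      have h12' : (α * r) * r ≤ (2 * (1 + M/γ) * N) * r := by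
        have : α * r^2 = (α * r) * r := by ring
        linarith [h12]
      have h13 : α * r ≤ 2 * (1 + M/γ) * N := le_of_mul_le_mul_right h12' h
      rw [div_mul_eq_mul_div, le_div_iff₀ hα0]
      linarith
  -- conclude
  have hz1 : ‖z.1‖ ≤ r + N := by
    calc ‖z.1‖ = ‖u + (z.1 - u)‖ := by congr 1; abel
      _ ≤ ‖u‖ + ‖z.1 - u‖ := norm_add_le _ _
      _ ≤ r + N := add_le_add hur step1
  have hz2 : ‖z.2‖ ≤ r + N := le_trans hzr (by linarith)
  rw [Prod.norm_def]
  have : max ‖z.1‖ ‖z.2‖ ≤ r + N := max_le hz1 hz2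
  calc max ‖z.1‖ ‖z.2‖ ≤ r + N := this
    _ ≤ 2 * (1 + M/γ) / α * N + N := by linarith
    _ = (2 * (1 + M/γ) / α + 1) * N := by ring


section general

variable {R : Type*} [NormedRing R] [HasSummableGeomSeries R]

lemma isUnit_near (C : ℝ) (hC : 0 < C) (a : Rˣ) (ha : ‖((a⁻¹ : Rˣ) : R)‖ ≤ C) (b : R)
    (hb : ‖(a : R) - b‖ ≤ 1/(2*C)) : IsUnit b := by
  set t := ((a⁻¹ : Rˣ) : R) * ((a : R) - b) with ht
  have hlt : ‖t‖ < 1 := by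
    calc ‖t‖ ≤ ‖((a⁻¹ : Rˣ) : R)‖ * ‖(a : R) - b‖ := norm_mul_le _ _
      _ ≤ C * (1/(2*C)) := by
          apply mul_le_mul ha hb (norm_nonneg _) hC.le
      _ = 1/2 := by field_simp
      _ < 1 := by norm_num
  refine ⟨a * Units.oneSub t hlt, ?_⟩
  rw [Units.val_mul, Units.val_oneSub, ht, mul_sub, mul_one, ← mul_assoc,
    Units.mul_inv, one_mul, sub_sub_cancel]

end general

section clm

variable {Y : Type*} [NormedAddCommGroup Y] [NormedSpace ℝ Y] [CompleteSpace Y]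

lemma inv_norm_le (C : ℝ) (hC : 0 ≤ C) (a : (Y →L[ℝ] Y)ˣ)
    (h : ∀ z, ‖z‖ ≤ C * ‖(a : Y →L[ℝ] Y) z‖) : ‖((a⁻¹ : (Y →L[ℝ] Y)ˣ) : Y →L[ℝ] Y)‖ ≤ C := by
  apply ContinuousLinearMap.opNorm_le_bound _ hC
  intro w
  have h2 := h (((a⁻¹ : (Y →L[ℝ] Y)ˣ) : Y →L[ℝ] Y) w)
  have h3 : (a : Y →L[ℝ] Y) (((a⁻¹ : (Y →L[ℝ] Y)ˣ) : Y →L[ℝ] Y) w) = w := by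
    rw [← ContinuousLinearMap.mul_apply, a.mul_inv, ContinuousLinearMap.one_apply]
  rwa [h3] at h2

lemma bij_of_isUnit {D : Y →L[ℝ] Y} (h : IsUnit D) : Function.Bijective D := by
  obtain ⟨a, ha⟩ := h
  rw [Function.bijective_iff_has_inverse]
  refine ⟨((a⁻¹ : (Y →L[ℝ] Y)ˣ) : Y →L[ℝ] Y), fun z => ?_, fun z => ?_⟩
  · rw [← ha, ← ContinuousLinearMap.mul_apply, a.inv_mul, ContinuousLinearMap.one_apply]
  · rw [← ha, ← ContinuousLinearMap.mul_apply, a.mul_inv, ContinuousLinearMap.one_apply]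

lemma isUnit_path (C δ : ℝ) (hC : 0 < C) (hδ : 0 < δ) (F : ℝ → (Y →L[ℝ] Y))
    (hlb : ∀ s, 0 ≤ s → s ≤ 1 → ∀ z, ‖z‖ ≤ C * ‖F s z‖)
    (hdiff : ∀ s s', 0 ≤ s' → s' ≤ s → s ≤ 1 → s - s' ≤ δ → ‖F s' - F s‖ ≤ 1/(2*C))
    (h0 : IsUnit (F 0)) :
    ∀ n : ℕ, ∀ s, 0 ≤ s → s ≤ 1 → s ≤ n * δ → IsUnit (F s) := by
  intro n
  induction n with
  | zero =>
    intro s h0s h1s hns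
    have hs : s = 0 := le_antisymm (by simpa using hns) h0s
    rwa [hs]
  | succ n ih =>
    intro s h0s h1s hns
    by_cases hcase : s ≤ n * δ
    · exact ih s h0s h1s hcase
    · push_neg at hcase
      set s' := max (s - δ) 0 with hs'
      have hs'0 : 0 ≤ s' := le_max_right _ _
      have hs'1 : s' ≤ 1 := max_le (by linarith) (by linarith)
      have hs's : s' ≤ s := max_le (by linarith) h0s
      have hss' : s - s' ≤ δ := by
        have : s - δ ≤ s' := le_max_left _ _
        linarith
      have hs'n : s' ≤ n * δ := by
        push_cast at hns
        apply max_le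
        · linarith
        · positivity
      obtain ⟨a, ha⟩ := ih s' hs'0 hs'1 hs'n
      have hinv : ‖((a⁻¹ : (Y →L[ℝ] Y)ˣ) : Y →L[ℝ] Y)‖ ≤ C := by
        apply inv_norm_le C hC.le a
        intro z
        rw [ha]
        exact hlb s' hs'0 hs'1 z
      apply isUnit_near C hC a hinv (F s)
      rw [ha]
      exact hdiff s s' hs'0 hs's h1s hss'

end clm


lemma Q_opNorm_le : ‖(Q E hE : X →L[ℝ] X)‖ ≤ 1 :=
  ContinuousLinearMap.opNorm_le_bound _ zero_le_one (fun z => by rw [one_mul]; exact Q_norm_le E hE z)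

lemma S_isUnit (hγ : γ ≠ 0) (hκ : κ ≠ 0) : IsUnit (S γ κ : X →L[ℝ] X) := by
  have hone : (κ/γ) * (γ/κ) = 1 := by field_simp
  have hone' : (γ/κ) * (κ/γ) = 1 := by field_simp
  refine isUnit_iff_exists.mpr
    ⟨(ContinuousLinearMap.id ℝ _).prodMap ((γ/κ) • ContinuousLinearMap.id ℝ _), ?_, ?_⟩
  · apply ContinuousLinearMap.ext
    intro z
    rw [ContinuousLinearMap.mul_apply, ContinuousLinearMap.one_apply]
    apply Prod.ext
    · simp [S]
    · show (κ/γ) • ((γ/κ) • z.2) = z.2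
      rw [smul_smul, hone, one_smul]
  · apply ContinuousLinearMap.ext
    intro z
    rw [ContinuousLinearMap.mul_apply, ContinuousLinearMap.one_apply]
    apply Prod.ext
    · simp [S]
    · show (γ/κ) • ((κ/γ) • z.2) = z.2
      rw [smul_smul, hone', one_smul]

lemma Ds_zero (A : X →L[ℝ] X) : Ds E hE γ κ A 0 = S γ κ := by
  rw [Ds, zero_mul, zero_smul ℝ ((Q E hE).comp A), add_zero]

lemma Ds_sub_norm (hγ : 0 < γ) (M : ℝ) (A : X →L[ℝ] X) (hAM : ‖A‖ ≤ M) (s s' : ℝ) :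
    ‖Ds E hE γ κ A s' - Ds E hE γ κ A s‖ ≤ |s' - s| * (γ⁻¹ * M) := by
  have hM : 0 ≤ M := le_trans (norm_nonneg _) hAM
  have e1 : Ds E hE γ κ A s' - Ds E hE γ κ A s = ((s' - s) * γ⁻¹) • ((Q E hE).comp A) := by
    rw [Ds, Ds, sub_mul, sub_smul (s' * γ⁻¹) (s * γ⁻¹) ((Q E hE).comp A)]
    abel
  rw [e1, norm_smul ((s' - s) * γ⁻¹) ((Q E hE).comp A), Real.norm_eq_abs, abs_mul, abs_inv]
  have h2 : ‖(Q E hE).comp A‖ ≤ M := by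
    calc ‖(Q E hE).comp A‖ ≤ ‖(Q E hE : X →L[ℝ] X)‖ * ‖A‖ := ContinuousLinearMap.opNorm_comp_le _ _
      _ ≤ 1 * M := mul_le_mul (Q_opNorm_le E hE) hAM (norm_nonneg _) zero_le_one
      _ = M := one_mul _
  calc |s' - s| * |γ|⁻¹ * ‖(Q E hE).comp A‖ ≤ |s' - s| * |γ|⁻¹ * M := by
        apply mul_le_mul_of_nonneg_left h2 (by positivity)
    _ = |s' - s| * (γ⁻¹ * M) := by rw [abs_of_pos hγ]; ring

end NDAux
/-- Surjectivity (indeed bijectivity) of the Newton derivative `D = DF_γ(v,c)` for `κ > 0`,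
together with a bound on `‖D⁻¹‖` depending only on `γ`, `κ` and (a bound `M` on) `‖A‖`,
uniform over all choices of active sets `E₁,…,E_m`. -/
theorem newton_derivative_bijective_and_uniformly_bounded_inverse
    (T : ℝ) (hT : 0 < T) (m : ℕ) (hm : 1 ≤ m)
    (γ κ M : ℝ) (hγ : 0 < γ) (hκ : 0 < κ) (hM : 0 ≤ M) :
    ∃ C > (0 : ℝ), ∀ A : Xsp T m →L[ℝ] Xsp T m,
      (∀ z w : Xsp T m,
        ⟪(A z).1, w.1⟫ + ⟪(A z).2, w.2⟫ = ⟪z.1, (A w).1⟫ + ⟪z.2, (A w).2⟫) →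
      (∀ z : Xsp T m, 0 ≤ ⟪(A z).1, z.1⟫ + ⟪(A z).2, z.2⟫) →
      ‖A‖ ≤ M →
      ∀ E : Fin m → Set ℝ, (∀ i, MeasurableSet (E i)) → (∀ i, E i ⊆ Set.Ioo 0 T) →
      ∀ D : Xsp T m →L[ℝ] Xsp T m,
        (∀ z : Xsp T m, ∀ᵐ t ∂(volume.restrict (Set.Ioo 0 T)), ∀ i,
          (D z).1 t i = z.1 t i + γ⁻¹ * (E i).indicator (fun _ => (1 : ℝ)) t * (A z).1 t i) →
        (∀ z : Xsp T m, (D z).2 = (κ / γ) • z.2 + γ⁻¹ • (A z).2) →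
        Function.Bijective D ∧ ∀ z : Xsp T m, ‖z‖ ≤ C * ‖D z‖ := by
  have hα0 : 0 < min 1 (κ/γ) := lt_min one_pos (div_pos hκ hγ)
  set C := 2 * (1 + M/γ) / min 1 (κ/γ) + 1 with hCdef
  have hC0 : 0 < C := by
    have h1 : 0 ≤ 2 * (1 + M/γ) / min 1 (κ/γ) := by
      apply div_nonneg _ hα0.le
      have : 0 ≤ M/γ := div_nonneg hM hγ.le
      linarith
    rw [hCdef]; linarith
  refine ⟨C, hC0, ?_⟩
  intro A hsym hpos hAM E hEmeas hEsub D hD1 hD2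
  -- identify D with Ds at s = 1
  have hDs : D = NDAux.Ds E hEmeas γ κ A 1 := by
    apply ContinuousLinearMap.ext
    intro z
    apply Prod.ext
    · rw [NDAux.Ds_fst]
      apply Lp.ext
      filter_upwards [hD1 z, NDAux.P_coe E hEmeas ((A z).1),
        Lp.coeFn_add z.1 ((1 * γ⁻¹) • NDAux.P E hEmeas ((A z).1)),
        Lp.coeFn_smul (1 * γ⁻¹) (NDAux.P E hEmeas ((A z).1))] with t h1 h2 h3 h4
      rw [h3, Pi.add_apply, h4, Pi.smul_apply, h2]
      ext i
      have e5 : (z.1 t + (1 * γ⁻¹) • NDAux.pe E t ((A z).1 t)) i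
          = z.1 t i + (1 * γ⁻¹) * ((E i).indicator (fun _ => (1:ℝ)) t * (A z).1 t i) := rfl
      rw [e5, h1 i]
      ring
    · rw [NDAux.Ds_snd, hD2 z, one_mul]
  set δ := 1/(2*C*(γ⁻¹*M+1)) with hδdef
  have hx0 : 0 < γ⁻¹*M+1 := by
    have : 0 ≤ γ⁻¹*M := mul_nonneg (inv_nonneg.mpr hγ.le) hM
    linarith
  have hδ0 : 0 < δ := by rw [hδdef]; positivity
  have hlb : ∀ s, 0 ≤ s → s ≤ 1 → ∀ z, ‖z‖ ≤ C * ‖NDAux.Ds E hEmeas γ κ A s z‖ :=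
    fun s hs0 hs1 z =>
      NDAux.lower_bound E hEmeas γ κ hγ hκ M hM A hpos hAM s hs0 hs1 z
  have hunit : IsUnit (NDAux.Ds E hEmeas γ κ A 1) := by
    obtain ⟨n, hn⟩ := exists_nat_ge (1/δ)
    refine NDAux.isUnit_path C δ hC0 hδ0 (NDAux.Ds E hEmeas γ κ A) hlb ?_ ?_ n 1
      zero_le_one le_rfl ?_
    · intro s s' hs'0 hs's hs1 hd
      calc ‖NDAux.Ds E hEmeas γ κ A s' - NDAux.Ds E hEmeas γ κ A s‖
          ≤ |s' - s| * (γ⁻¹ * M) := NDAux.Ds_sub_norm E hEmeas γ κ hγ M A hAM s s'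
        _ ≤ δ * (γ⁻¹ * M) := by
            apply mul_le_mul_of_nonneg_right _ (mul_nonneg (inv_nonneg.mpr hγ.le) hM)
            rw [abs_sub_comm, abs_of_nonneg (by linarith)]
            linarith
        _ ≤ δ * (γ⁻¹ * M + 1) := by
            apply mul_le_mul_of_nonneg_left _ hδ0.le
            linarith
        _ = 1/(2*C) := by
            rw [hδdef]
            field_simp
    · rw [NDAux.Ds_zero]
      exact NDAux.S_isUnit γ κ hγ.ne' hκ.ne'
    · rw [div_le_iff₀ hδ0] at hn
      linarith [hn]
  constructor
  · rw [hDs]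
    exact NDAux.bij_of_isUnit hunit
  · intro z
    rw [hDs]
    exact hlb 1 zero_le_one le_rfl z
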